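/- Let Y be a random variable supported on [−1, 1] with E(Y) = 0 satisfying P(Y > 1 − 1/t) ≫ exp(−c e^{√t}) for all t ≥ 1 and some constant c > 0. Define f(t) = log E(e^{tY}) for 0 ≤ t < 1 and f(t) = log E(e^{tY}) − t for t ≥ 1. Then f(t) ≪ t^2 for 0 ≤ t < 1, and f(t) ≪ t/(log 2t)^2 for t ≥ 1. In particular the integral ∫_0^∞ f(u)/u^2 du converges. -/

import Mathlib

open Real MeasureTheory

lemma exp_le_quad {x : ℝ} (hx : |x| ≤ 1) : Real.exp x ≤ 1 + x + x ^ 2 := by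
  have h := Real.exp_bound hx (n := 2) (by norm_num)
  rw [Finset.sum_range_succ, Finset.sum_range_succ, Finset.sum_range_zero] at h
  simp only [pow_zero, pow_one, Nat.factorial] at h
  have h2 : |Real.exp x - (0 + 1/1 + x/1)| ≤ |x|^2 * (3 / (2*2)) := by
    convert h using 3 <;> norm_num
  have hx2 : |x|^2 = x^2 := sq_abs x
  rw [hx2] at h2
  have := abs_le.1 h2
  nlinarith [sq_nonneg x]

lemma log_sq_le {t : ℝ} (ht : 1 ≤ t) : (Real.log (2*t))^2 ≤ 8 * t := by
  have h0 : (0:ℝ) ≤ 2*t := by linarith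
  have h := Real.log_le_rpow_div h0 (by norm_num : (0:ℝ) < 1/2)
  have hsq : ((2*t) ^ ((1:ℝ)/2))^2 = 2*t := by
    rw [← Real.rpow_natCast ((2*t) ^ ((1:ℝ)/2)) 2, ← Real.rpow_mul h0]
    norm_num
  have hl0 : 0 ≤ Real.log (2*t) := Real.log_nonneg (by linarith)
  have h' : Real.log (2*t) ≤ 2 * (2*t) ^ ((1:ℝ)/2) := by
    calc Real.log (2*t) ≤ (2*t) ^ ((1:ℝ)/2) / (1/2) := h
    _ = 2 * (2*t) ^ ((1:ℝ)/2) := by ring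
  nlinarith [Real.rpow_nonneg h0 ((1:ℝ)/2)]

lemma sqrt_log_sq_le {t : ℝ} (ht : 1 ≤ t) :
    (2*t) ^ ((1:ℝ)/2) * (Real.log (2*t))^2 ≤ 128 * t := by
  have h0 : (0:ℝ) < 2*t := by linarith
  have h := Real.log_le_rpow_div h0.le (by norm_num : (0:ℝ) < 1/8)
  have h' : Real.log (2*t) ≤ 8 * (2*t) ^ ((1:ℝ)/8) := by
    calc Real.log (2*t) ≤ (2*t) ^ ((1:ℝ)/8) / (1/8) := h
    _ = 8 * (2*t) ^ ((1:ℝ)/8) := by ring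
  have hl0 : 0 ≤ Real.log (2*t) := Real.log_nonneg (by linarith)
  have hq : (Real.log (2*t))^2 ≤ 64 * (2*t) ^ ((1:ℝ)/4) := by
    have hsq : ((2*t) ^ ((1:ℝ)/8))^2 = (2*t) ^ ((1:ℝ)/4) := by
      rw [← Real.rpow_natCast ((2*t) ^ ((1:ℝ)/8)) 2, ← Real.rpow_mul h0.le]
      norm_num
    nlinarith [Real.rpow_nonneg h0.le ((1:ℝ)/8)]
  have hmul : (2*t) ^ ((1:ℝ)/2) * (2*t) ^ ((1:ℝ)/4) = (2*t) ^ ((3:ℝ)/4) := by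
    rw [← Real.rpow_add h0]; norm_num
  have hle : (2*t) ^ ((3:ℝ)/4) ≤ 2*t := by
    calc (2*t) ^ ((3:ℝ)/4) ≤ (2*t) ^ (1:ℝ) :=
      Real.rpow_le_rpow_of_exponent_le (by linarith) (by norm_num)
    _ = 2*t := Real.rpow_one _
  have hp : 0 ≤ (2*t) ^ ((1:ℝ)/2) := Real.rpow_nonneg h0.le _
  nlinarith [Real.rpow_nonneg h0.le ((1:ℝ)/4), sq_nonneg (Real.log (2*t))]

lemma int_aux : IntegrableOn (fun u : ℝ => 1 / (u * (Real.log (2*u))^2)) (Set.Ioi 1) volume := by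
  have hderiv : ∀ x ∈ Set.Ici (1:ℝ), HasDerivAt (fun u : ℝ => -(Real.log (2*u))⁻¹)
      (1 / (x * (Real.log (2*x))^2)) x := by
    intro x hx
    have hx1 : (1:ℝ) ≤ x := hx
    have hx0 : (0:ℝ) < x := by linarith
    have hL : 0 < Real.log (2*x) := Real.log_pos (by linarith)
    have h1 : HasDerivAt (fun u : ℝ => 2*u) 2 x := by
      simpa using (hasDerivAt_id x).const_mul (2:ℝ)
    have h2 : HasDerivAt (fun u : ℝ => Real.log (2*u)) (2/(2*x)) x :=
      h1.log (by positivity)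
    have h3 : HasDerivAt (fun u : ℝ => -(Real.log (2*u))⁻¹) (-(-(2/(2*x)) / (Real.log (2*x))^2)) x :=
      (h2.inv hL.ne').neg
    convert h3 using 1
    field_simp
  have htend : Filter.Tendsto (fun u : ℝ => -(Real.log (2*u))⁻¹) Filter.atTop (nhds 0) := by
    have h1 : Filter.Tendsto (fun u : ℝ => Real.log (2*u)) Filter.atTop Filter.atTop :=
      Real.tendsto_log_atTop.comp (Filter.tendsto_id.const_mul_atTop two_pos)
    simpa using (h1.inv_tendsto_atTop).neg
  exact integrableOn_Ioi_deriv_of_nonneg' hderiv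
    (fun x hx => by
      have hx0 : (0:ℝ) < x := lt_trans one_pos hx
      positivity) htend

set_option maxHeartbeats 1000000 in
/-- For a mean-zero random variable `Y` supported on `[-1,1]` with
`P(Y > 1 - 1/t) ≫ exp(-c e^{√t})`, the function `f(t) = log E(e^{tY})` (minus `t` for `t ≥ 1`)
satisfies `f(t) ≪ t²` on `[0,1)` and `f(t) ≪ t/(log 2t)²` on `[1,∞)`; in particular
`∫_0^∞ f(u)/u² du` converges. -/
theorem stmt_7 {Ω : Type*} [MeasurableSpace Ω] (μ : Measure Ω) [IsProbabilityMeasure μ]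
    (Y : Ω → ℝ) (hYmeas : Measurable Y) (hYbdd : ∀ ω, Y ω ∈ Set.Icc (-1 : ℝ) 1)
    (hYmean : ∫ ω, Y ω ∂μ = 0)
    (c κ : ℝ) (hc : 0 < c) (hκ : 0 < κ)
    (hYlow : ∀ t : ℝ, 1 ≤ t →
      κ * Real.exp (-c * Real.exp (Real.sqrt t)) ≤ (μ {ω | 1 - 1 / t < Y ω}).toReal)
    (f : ℝ → ℝ)
    (hf : ∀ t : ℝ, 0 ≤ t →
      f t = if t < 1 then Real.log (∫ ω, Real.exp (t * Y ω) ∂μ)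
            else Real.log (∫ ω, Real.exp (t * Y ω) ∂μ) - t) :
    ∃ C > 0,
      (∀ t : ℝ, 0 ≤ t → t < 1 → |f t| ≤ C * t ^ 2) ∧
      (∀ t : ℝ, 1 ≤ t → |f t| ≤ C * t / (Real.log (2 * t)) ^ 2) ∧
      IntegrableOn (fun u => f u / u ^ 2) (Set.Ioi (0 : ℝ)) volume := by
  have hYb : ∀ ω, |Y ω| ≤ 1 := fun ω => abs_le.2 ⟨(hYbdd ω).1, (hYbdd ω).2⟩
  -- integrability of the exponential
  have hint : ∀ t : ℝ, Integrable (fun ω => Real.exp (t * Y ω)) μ := by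
    intro t
    refine Integrable.mono' (integrable_const (Real.exp |t|))
      ((hYmeas.const_mul t).exp.aestronglyMeasurable) (Filter.Eventually.of_forall fun ω => ?_)
    rw [Real.norm_eq_abs, Real.abs_exp]
    refine Real.exp_le_exp.2 ?_
    calc t * Y ω ≤ |t * Y ω| := le_abs_self _
      _ = |t| * |Y ω| := abs_mul _ _
      _ ≤ |t| * 1 := mul_le_mul_of_nonneg_left (hYb ω) (abs_nonneg t)
      _ = |t| := mul_one _
  have hintY : Integrable Y μ := by
    refine Integrable.mono' (integrable_const 1) hYmeas.aestronglyMeasurable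
      (Filter.Eventually.of_forall fun ω => ?_)
    rw [Real.norm_eq_abs]; exact hYb ω
  have hintY2 : Integrable (fun ω => (Y ω)^2) μ := by
    refine Integrable.mono' (integrable_const 1) ((hYmeas.pow_const 2).aestronglyMeasurable)
      (Filter.Eventually.of_forall fun ω => ?_)
    rw [Real.norm_eq_abs, abs_pow]
    exact pow_le_one₀ (abs_nonneg _) (hYb ω)
  have hY2le : ∫ ω, (Y ω)^2 ∂μ ≤ 1 := by
    calc ∫ ω, (Y ω)^2 ∂μ ≤ ∫ _ω, (1:ℝ) ∂μ := by
          refine integral_mono hintY2 (integrable_const 1) fun ω => ?_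
          have := hYb ω; nlinarith [sq_abs (Y ω), abs_nonneg (Y ω)]
      _ = 1 := by simp
  have hF1 : ∀ t : ℝ, 1 ≤ ∫ ω, Real.exp (t * Y ω) ∂μ := by
    intro t
    have hmono : ∫ ω, (1 + t * Y ω) ∂μ ≤ ∫ ω, Real.exp (t * Y ω) ∂μ := by
      refine integral_mono ((integrable_const 1).add (hintY.const_mul t)) (hint t) fun ω => ?_
      have := Real.add_one_le_exp (t * Y ω); linarith
    have hval : ∫ ω, (1 + t * Y ω) ∂μ = 1 := by
      rw [integral_add (integrable_const 1) (hintY.const_mul t), integral_const,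
        integral_const_mul, hYmean]
      simp
    linarith
  have hFpos : ∀ t : ℝ, 0 < ∫ ω, Real.exp (t * Y ω) ∂μ :=
    fun t => lt_of_lt_of_le one_pos (hF1 t)
  -- upper bound log F t ≤ t for t ≥ 0
  have hFub : ∀ t : ℝ, 0 ≤ t → Real.log (∫ ω, Real.exp (t * Y ω) ∂μ) ≤ t := by
    intro t ht
    have hle : ∫ ω, Real.exp (t * Y ω) ∂μ ≤ Real.exp t := by
      calc ∫ ω, Real.exp (t * Y ω) ∂μ ≤ ∫ _ω, Real.exp t ∂μ := by
            refine integral_mono (hint t) (integrable_const _) fun ω => ?_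
            refine Real.exp_le_exp.2 ?_
            nlinarith [(hYbdd ω).2]
        _ = Real.exp t := by simp
    calc Real.log (∫ ω, Real.exp (t * Y ω) ∂μ) ≤ Real.log (Real.exp t) :=
        Real.log_le_log (hFpos t) hle
      _ = t := Real.log_exp t
  -- part 1 raw bound
  have hpart1 : ∀ t : ℝ, 0 ≤ t → t < 1 → |f t| ≤ t ^ 2 := by
    intro t ht ht1
    rw [hf t ht, if_pos ht1]
    have hFle : ∫ ω, Real.exp (t * Y ω) ∂μ ≤ 1 + t ^ 2 := by
      have hmono : ∫ ω, Real.exp (t * Y ω) ∂μ ≤ ∫ ω, (1 + t * Y ω + t^2 * (Y ω)^2) ∂μ := by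
        refine integral_mono (hint t)
          (((integrable_const 1).add (hintY.const_mul t)).add (hintY2.const_mul (t^2)))
          fun ω => ?_
        have habs : |t * Y ω| ≤ 1 := by
          rw [abs_mul, abs_of_nonneg ht]
          exact mul_le_one₀ ht1.le (abs_nonneg _) (hYb ω)
        have := exp_le_quad habs
        nlinarith [sq_nonneg (Y ω)]
      have hval : ∫ ω, (1 + t * Y ω + t^2 * (Y ω)^2) ∂μ = 1 + t^2 * ∫ ω, (Y ω)^2 ∂μ := by
        have e : ∫ ω, (1 + t * Y ω + t^2 * (Y ω)^2) ∂μ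
            = (∫ ω, (1 + t * Y ω) ∂μ) + ∫ ω, t^2 * (Y ω)^2 ∂μ :=
          integral_add ((integrable_const 1).add (hintY.const_mul t)) (hintY2.const_mul (t^2))
        rw [e, integral_add (integrable_const 1) (hintY.const_mul t), integral_const,
          integral_const_mul, integral_const_mul, hYmean]
        simp
      nlinarith [sq_nonneg t]
    rw [abs_of_nonneg (Real.log_nonneg (hF1 t))]
    calc Real.log (∫ ω, Real.exp (t * Y ω) ∂μ) ≤ (∫ ω, Real.exp (t * Y ω) ∂μ) - 1 :=
        Real.log_le_sub_one_of_pos (hFpos t)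
      _ ≤ t^2 := by linarith
  -- key lower bound
  have hKey : ∀ t s : ℝ, 1 ≤ t → 1 ≤ s →
      t - t/s - c * Real.exp (Real.sqrt s) + Real.log κ
        ≤ Real.log (∫ ω, Real.exp (t * Y ω) ∂μ) := by
    intro t s ht hs
    have hAm : MeasurableSet {ω | 1 - 1/s < Y ω} := measurableSet_lt measurable_const hYmeas
    have h1 : Real.exp (t * (1 - 1/s)) * (μ {ω | 1 - 1/s < Y ω}).toReal
        ≤ ∫ ω in {ω | 1 - 1/s < Y ω}, Real.exp (t * Y ω) ∂μ := by
      refine setIntegral_ge_of_const_le_real hAm (measure_ne_top μ _) (fun ω hω => ?_)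
        ((hint t).integrableOn)
      exact Real.exp_le_exp.2 (mul_le_mul_of_nonneg_left (le_of_lt hω) (by linarith))
    have h2 : ∫ ω in {ω | 1 - 1/s < Y ω}, Real.exp (t * Y ω) ∂μ
        ≤ ∫ ω, Real.exp (t * Y ω) ∂μ :=
      setIntegral_le_integral (hint t) (Filter.Eventually.of_forall fun ω => (Real.exp_pos _).le)
    have h3 := hYlow s hs
    have h4 : Real.exp (t * (1 - 1/s)) * (κ * Real.exp (-c * Real.exp (Real.sqrt s)))
        ≤ ∫ ω, Real.exp (t * Y ω) ∂μ := by
      calc Real.exp (t * (1 - 1/s)) * (κ * Real.exp (-c * Real.exp (Real.sqrt s)))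
          ≤ Real.exp (t * (1 - 1/s)) * (μ {ω | 1 - 1/s < Y ω}).toReal :=
            mul_le_mul_of_nonneg_left h3 (Real.exp_pos _).le
        _ ≤ _ := le_trans h1 h2
    have h5 := Real.log_le_log (by positivity) h4
    rw [Real.log_mul (Real.exp_ne_zero _) (by positivity), Real.log_exp,
      Real.log_mul hκ.ne' (Real.exp_ne_zero _), Real.log_exp] at h5
    calc t - t/s - c * Real.exp (Real.sqrt s) + Real.log κ
        = t * (1 - 1/s) + (Real.log κ + -c * Real.exp (Real.sqrt s)) := by
          field_simp; ring
      _ ≤ _ := h5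
  -- part 2 raw bound with explicit constant
  set C2 : ℝ := 8*(Real.exp 2 / 2 + c * Real.exp 1 + |Real.log κ|) + 4 + 128*c + 8*|Real.log κ|
    with hC2def
  have hC2ge1 : (1:ℝ) ≤ C2 := by
    rw [hC2def]
    nlinarith [mul_nonneg hc.le (Real.exp_pos 1).le, (Real.exp_pos 2).le,
      abs_nonneg (Real.log κ), hc.le]
  have hC2pos : 0 < C2 := by
    have := abs_nonneg (Real.log κ)
    have := Real.exp_pos (2:ℝ)
    have := Real.exp_pos (1:ℝ)
    rw [hC2def]; positivity
  have hpart2 : ∀ t : ℝ, 1 ≤ t → |f t| ≤ C2 * (t / (Real.log (2*t))^2) := by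
    intro t ht
    have ht0 : (0:ℝ) ≤ t := by linarith
    have hL : 0 < Real.log (2*t) := Real.log_pos (by linarith)
    have hL8 := log_sq_le ht
    have hD0 : 0 < t / (Real.log (2*t))^2 := by positivity
    have h8D : 1 ≤ 8 * (t / (Real.log (2*t))^2) := by
      rw [mul_div_assoc']
      exact (one_le_div (by positivity)).2 hL8
    have hflog : Real.log (∫ ω, Real.exp (t * Y ω) ∂μ) ≤ t := hFub t ht0
    rw [hf t ht0, if_neg (not_lt.2 ht), abs_of_nonpos (by linarith)]
    rw [neg_sub]
    -- goal : t - log (...) ≤ C2 * (t / (log (2t))^2)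
    rcases le_or_gt (Real.exp 2) (2*t) with hcase | hcase
    · -- large t
      have hL2 : 2 ≤ Real.log (2*t) := by
        calc (2:ℝ) = Real.log (Real.exp 2) := (Real.log_exp 2).symm
          _ ≤ Real.log (2*t) := Real.log_le_log (Real.exp_pos 2) hcase
      have hs1 : (1:ℝ) ≤ (Real.log (2*t)/2)^2 := by nlinarith
      have key := hKey t ((Real.log (2*t)/2)^2) ht hs1
      rw [Real.sqrt_sq (by linarith : (0:ℝ) ≤ Real.log (2*t)/2)] at key
      have hexp : Real.exp (Real.log (2*t)/2) = (2*t) ^ ((1:ℝ)/2) := by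
        have hpos : (0:ℝ) < 2*t := by linarith
        have : Real.log (2*t)/2 = Real.log ((2*t) ^ ((1:ℝ)/2)) := by
          rw [Real.log_rpow hpos]; ring
        rw [this, Real.exp_log (Real.rpow_pos_of_pos hpos _)]
      rw [hexp] at key
      have e1 : t / ((Real.log (2*t)/2)^2) = 4 * (t / (Real.log (2*t))^2) := by
        field_simp
        ring
      rw [e1] at key
      have e2 : c * ((2*t) ^ ((1:ℝ)/2)) ≤ 128 * c * (t / (Real.log (2*t))^2) := by
        have h := sqrt_log_sq_le ht
        have h' : (2*t) ^ ((1:ℝ)/2) ≤ 128 * (t / (Real.log (2*t))^2) := by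
          rw [mul_div_assoc']
          rw [le_div_iff₀ (by positivity)]
          linarith
        calc c * ((2*t) ^ ((1:ℝ)/2)) ≤ c * (128 * (t / (Real.log (2*t))^2)) :=
            mul_le_mul_of_nonneg_left h' hc.le
          _ = 128 * c * (t / (Real.log (2*t))^2) := by ring
      have e3 : -Real.log κ ≤ 8*|Real.log κ| * (t / (Real.log (2*t))^2) := by
        have h1 : -Real.log κ ≤ |Real.log κ| := neg_le_abs _
        have h2 : |Real.log κ| * 1 ≤ |Real.log κ| * (8 * (t / (Real.log (2*t))^2)) :=
          mul_le_mul_of_nonneg_left h8D (abs_nonneg _)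
        calc -Real.log κ ≤ |Real.log κ| := h1
          _ = |Real.log κ| * 1 := (mul_one _).symm
          _ ≤ |Real.log κ| * (8 * (t / (Real.log (2*t))^2)) := h2
          _ = 8*|Real.log κ| * (t / (Real.log (2*t))^2) := by ring
      have hK0 : 0 ≤ Real.exp 2 / 2 + c * Real.exp 1 + |Real.log κ| := by positivity
      rw [hC2def]
      nlinarith [mul_nonneg hK0 hD0.le]
    · -- small t : use s = 1
      have key := hKey t 1 ht le_rfl
      rw [Real.sqrt_one] at key
      have h1 : t - Real.log (∫ ω, Real.exp (t * Y ω) ∂μ)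
          ≤ Real.exp 2 / 2 + c * Real.exp 1 + |Real.log κ| := by
        have hneg : -Real.log κ ≤ |Real.log κ| := neg_le_abs _
        have : t/1 = t := by norm_num
        nlinarith [key]
      have hK0 : 0 ≤ Real.exp 2 / 2 + c * Real.exp 1 + |Real.log κ| := by positivity
      have h2 : Real.exp 2 / 2 + c * Real.exp 1 + |Real.log κ|
          ≤ 8*(Real.exp 2 / 2 + c * Real.exp 1 + |Real.log κ|) * (t / (Real.log (2*t))^2) := by
        nlinarith [mul_nonneg hK0 hD0.le]
      rw [hC2def]
      nlinarith [abs_nonneg (Real.log κ), mul_nonneg (mul_nonneg (by norm_num : (0:ℝ) ≤ 8) (abs_nonneg (Real.log κ))) hD0.le, mul_nonneg hc.le hD0.le]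
  -- continuity of the moment generating function
  have hFcont : Continuous (fun t : ℝ => ∫ ω, Real.exp (t * Y ω) ∂μ) := by
    rw [continuous_iff_continuousAt]
    intro t₀
    apply continuousAt_of_dominated (bound := fun _ => Real.exp (|t₀| + 1))
    · exact Filter.Eventually.of_forall fun x => (hYmeas.const_mul x).exp.aestronglyMeasurable
    · have hb : ∀ᶠ x in nhds t₀, |x| ≤ |t₀| + 1 := by
        have hmem : Set.Ioo (t₀ - 1) (t₀ + 1) ∈ nhds t₀ :=
          Ioo_mem_nhds (by linarith) (by linarith)
        filter_upwards [hmem] with x hx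
        have h1 := neg_abs_le t₀
        have h2 := le_abs_self t₀
        rw [abs_le]
        constructor <;> [linarith [hx.1]; linarith [hx.2]]
      filter_upwards [hb] with x hx
      refine Filter.Eventually.of_forall fun ω => ?_
      rw [Real.norm_eq_abs, Real.abs_exp]
      refine Real.exp_le_exp.2 ?_
      calc x * Y ω ≤ |x * Y ω| := le_abs_self _
        _ = |x| * |Y ω| := abs_mul _ _
        _ ≤ (|t₀| + 1) * 1 := by
            refine mul_le_mul hx (hYb ω) (abs_nonneg _) (by positivity)
        _ = |t₀| + 1 := mul_one _
    · exact integrable_const _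
    · exact Filter.Eventually.of_forall fun ω =>
        (Real.continuous_exp.comp (continuous_id.mul continuous_const)).continuousAt
  have hgq : Measurable (fun u : ℝ =>
      (if u < 1 then Real.log (∫ ω, Real.exp (u * Y ω) ∂μ)
        else Real.log (∫ ω, Real.exp (u * Y ω) ∂μ) - u) / u^2) := by
    refine Measurable.div ?_ (measurable_id.pow_const 2)
    refine Measurable.ite (measurableSet_lt measurable_id measurable_const) ?_ ?_
    · exact Real.measurable_log.comp hFcont.measurable
    · exact (Real.measurable_log.comp hFcont.measurable).sub measurable_id
  have hmeas : ∀ s : Set ℝ, MeasurableSet s → s ⊆ Set.Ioi 0 →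
      AEStronglyMeasurable (fun u => f u / u^2) (volume.restrict s) := by
    intro s hs hsub
    refine hgq.aestronglyMeasurable.congr ?_
    rw [Filter.EventuallyEq, ae_restrict_iff' hs]
    refine Filter.Eventually.of_forall fun u hu => ?_
    have h0 : (0:ℝ) < u := hsub hu
    rw [← hf u h0.le]
  set C : ℝ := C2 + 1 with hCdef
  have hC1 : (1:ℝ) ≤ C := by linarith
  have hCpos : 0 < C := by linarith
  refine ⟨C, hCpos, ?_, ?_, ?_⟩
  · intro t ht ht1
    have := hpart1 t ht ht1
    nlinarith [sq_nonneg t]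
  · intro t ht
    have h := hpart2 t ht
    have hL : 0 < Real.log (2*t) := Real.log_pos (by linarith)
    have hD0 : 0 ≤ t / (Real.log (2*t))^2 := by positivity
    calc |f t| ≤ C2 * (t / (Real.log (2*t))^2) := h
      _ ≤ C * (t / (Real.log (2*t))^2) := by
          refine mul_le_mul_of_nonneg_right (by linarith) hD0
      _ = C * t / (Real.log (2*t))^2 := by rw [mul_div_assoc]
  · have hsplit : Set.Ioi (0:ℝ) = Set.Ioc 0 1 ∪ Set.Ioi 1 :=
      (Set.Ioc_union_Ioi_eq_Ioi zero_le_one).symm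
    have hb1 : IntegrableOn (fun u => f u / u^2) (Set.Ioc 0 1) volume := by
      refine Integrable.mono' (integrable_const (C2 + C2 / (Real.log 2)^2))
        (hmeas _ measurableSet_Ioc (fun x hx => hx.1)) ?_
      rw [ae_restrict_iff' measurableSet_Ioc]
      refine Filter.Eventually.of_forall fun u hu => ?_
      obtain ⟨hu0, hu1⟩ := hu
      have hlog2 : (0:ℝ) < Real.log 2 := Real.log_pos (by norm_num)
      have hC2r : 0 ≤ C2 / (Real.log 2)^2 := by positivity
      rw [Real.norm_eq_abs, abs_div, abs_of_nonneg (sq_nonneg u)]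
      rcases lt_or_eq_of_le hu1 with h | h
      · have hb := hpart1 u hu0.le h
        have hu2 : (0:ℝ) < u^2 := by positivity
        have h1 : |f u| / u^2 ≤ 1 := by
          rw [div_le_one hu2]; simpa using hb
        calc |f u| / u^2 ≤ 1 := h1
          _ ≤ C2 := hC2ge1
          _ ≤ C2 + C2 / (Real.log 2)^2 := le_add_of_nonneg_right hC2r
      · subst h
        have hb := hpart2 1 le_rfl
        have h2 : Real.log (2*1) = Real.log 2 := by norm_num
        rw [h2] at hb
        have hgoal : |f 1| / (1:ℝ)^2 = |f 1| := by norm_num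
        rw [hgoal]
        calc |f 1| ≤ C2 * (1 / (Real.log 2)^2) := hb
          _ = C2 / (Real.log 2)^2 := by ring
          _ ≤ C2 + C2 / (Real.log 2)^2 := le_add_of_nonneg_left hC2pos.le
    have hb2 : IntegrableOn (fun u => f u / u^2) (Set.Ioi 1) volume := by
      refine Integrable.mono' (int_aux.const_mul C2)
        (hmeas _ measurableSet_Ioi (fun x hx => show (0:ℝ) < x from lt_trans one_pos hx)) ?_
      rw [ae_restrict_iff' measurableSet_Ioi]
      refine Filter.Eventually.of_forall fun u hu => ?_
      have hu1 : (1:ℝ) < u := hu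
      have hbd := hpart2 u hu1.le
      have hL : 0 < Real.log (2*u) := Real.log_pos (by linarith)
      have hu0 : (0:ℝ) < u := lt_trans one_pos hu1
      rw [Real.norm_eq_abs, abs_div, abs_of_nonneg (sq_nonneg u),
        div_le_iff₀ (by positivity : (0:ℝ) < u^2)]
      calc |f u| ≤ C2 * (u / (Real.log (2*u))^2) := hbd
        _ = C2 * (1/(u*(Real.log (2*u))^2)) * u^2 := by
            field_simp
    rw [hsplit]
    exact hb1.union hb2
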